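/- Let B = (M_1,…,M_k)^T with each M_i drawn independently and uniformly from S^(ℓ,n), for ℓ,n,k ≥ 1. Then the probability P_f(ℓ,n,k) that B contains a stopping set (i.e., some nonempty I ⊆ {1,…,n} such that B_I is a stopping matrix) satisfies P_f(ℓ,n,k) ≤ Σ_{i=2}^{n} C(n,i) (z(ℓ,i)/ℓ^i)^k. -/

import Mathlib

/-- Column weight: number of ones in column `j`. -/
def colWt {l n : ℕ} (M : Fin l → Fin n → Bool) (j : Fin n) : ℕ :=
  (Finset.univ.filter (fun i => M i j)).card

/-- Row weight: number of ones in row `i`. -/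
def rowWt {l n : ℕ} (M : Fin l → Fin n → Bool) (i : Fin l) : ℕ :=
  (Finset.univ.filter (fun j => M i j)).card

/-- `M ∈ S^(l,n)`: every column has Hamming weight exactly 1. -/
def isS {l n : ℕ} (M : Fin l → Fin n → Bool) : Prop :=
  ∀ j, colWt M j = 1

/-- Stopping matrix: no row has Hamming weight exactly 1. -/
def isStop {l n : ℕ} (M : Fin l → Fin n → Bool) : Prop :=
  ∀ i, rowWt M i ≠ 1

instance {l n : ℕ} : DecidablePred (isS (l := l) (n := n)) := fun _ =>
  inferInstanceAs (Decidable (∀ _, _ = _))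

instance {l n : ℕ} : DecidablePred (isStop (l := l) (n := n)) := fun _ =>
  inferInstanceAs (Decidable (∀ _, _ ≠ _))

/-- `z l n`: number of stopping matrices in `S^(l,n)`. -/
def z (l n : ℕ) : ℕ :=
  Fintype.card {M : Fin l → Fin n → Bool // isS M ∧ isStop M}

/-- The submatrix of the stacked matrix `B` on columns `I` is a stopping matrix. -/
def stopOn {l n k : ℕ} (B : Fin k → {M : Fin l → Fin n → Bool // isS M})
    (I : Finset (Fin n)) : Prop :=
  ∀ a : Fin k, ∀ i : Fin l, (I.filter (fun j => (B a).1 i j)).card ≠ 1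

instance {l n k : ℕ} (I : Finset (Fin n)) :
    DecidablePred (fun B : Fin k → {M : Fin l → Fin n → Bool // isS M} => stopOn B I) :=
  fun _ => inferInstanceAs (Decidable (∀ _, ∀ _, _ ≠ _))

open Finset

def mkMat {l m : ℕ} (f : Fin m → Fin l) : Fin l → Fin m → Bool := fun i j => decide (f j = i)

lemma isS_mkMat {l m : ℕ} (f : Fin m → Fin l) : isS (mkMat f) := by
  intro j
  simp only [colWt, mkMat, decide_eq_true_eq]
  rw [Finset.filter_eq]
  simp

lemma mkMat_bij {l m : ℕ} :
    Function.Bijective (fun f : Fin m → Fin l => (⟨mkMat f, isS_mkMat f⟩ : {M // isS M})) := by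
  constructor
  · intro f g h
    funext j
    have := congrFun (congrFun (congrArg Subtype.val h) (f j)) j
    simp [mkMat] at this
    exact this.symm
  · rintro ⟨M, hM⟩
    have h : ∀ j, ∃ a, Finset.univ.filter (fun i => M i j) = {a} :=
      fun j => Finset.card_eq_one.mp (hM j)
    choose f hf using h
    refine ⟨f, ?_⟩
    ext i j
    have : M i j = true ↔ i = f j := by
      have h2 : i ∈ Finset.univ.filter (fun i => M i j) ↔ i ∈ ({f j} : Finset (Fin l)) := by
        rw [hf j]
      simpa using h2
    simp only [mkMat]
    by_cases hij : M i j = true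
    · simp [hij, (this.mp hij).symm]
    · simp only [Bool.not_eq_true] at hij
      rw [hij]
      simp only [decide_eq_false_iff_not]
      intro hfj
      exact absurd (this.mpr hfj.symm) (by simp [hij])

lemma cardP (l m : ℕ) :
    Fintype.card {f : Fin m → Fin l // ∀ i, (Finset.univ.filter fun j => f j = i).card ≠ 1}
      = z l m := by
  rw [z]
  refine Fintype.card_congr (Equiv.trans ?_ (Equiv.subtypeSubtypeEquivSubtypeInter isS isStop))
  refine Equiv.subtypeEquiv (Equiv.ofBijective _ mkMat_bij) ?_
  intro f
  simp only [Equiv.ofBijective_apply]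
  constructor
  · intro h i hi
    exact h i (by simpa [rowWt, mkMat] using hi)
  · intro h i hi
    exact h i (by simpa [rowWt, mkMat] using hi)

lemma cardP' (γ : Type) [Fintype γ] [DecidableEq γ] (l : ℕ) :
    Fintype.card {g : γ → Fin l // ∀ i, (Finset.univ.filter fun x => g x = i).card ≠ 1}
      = z l (Fintype.card γ) := by
  rw [← cardP l (Fintype.card γ)]
  refine Fintype.card_congr
    (Equiv.subtypeEquiv (Equiv.arrowCongr (Fintype.equivFin γ) (Equiv.refl _)) ?_)
  intro g
  have key : ∀ i : Fin l,
      (Finset.univ.filter fun x : γ => g x = i).card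
        = (Finset.univ.filter fun y : Fin (Fintype.card γ) =>
            (Equiv.arrowCongr (Fintype.equivFin γ) (Equiv.refl (Fin l)) g) y = i).card := by
    intro i
    rw [← Fintype.card_subtype, ← Fintype.card_subtype]
    exact Fintype.card_congr ((Fintype.equivFin γ).subtypeEquiv (by
      intro x; simp [Equiv.arrowCongr]))
  constructor
  · intro h i; rw [← key i]; exact h i
  · intro h i; rw [key i]; exact h i

lemma filter_card_attach {n l : ℕ} (I : Finset (Fin n)) (f : Fin n → Fin l) (i : Fin l) :
    (I.filter fun j => f j = i).card
      = (Finset.univ.filter fun x : {j // j ∈ I} => f x.1 = i).card := by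
  rw [← Fintype.card_subtype]
  have : I.filter (fun j => f j = i) = Finset.univ.filter (fun j => j ∈ I ∧ f j = i) := by
    ext j; simp
  rw [this, ← Fintype.card_subtype]
  exact Fintype.card_congr
    (Equiv.subtypeSubtypeEquivSubtypeInter (· ∈ I) (fun j => f j = i)).symm

lemma cardQI {n : ℕ} (l : ℕ) (I : Finset (Fin n)) :
    Fintype.card {M : {M : Fin l → Fin n → Bool // isS M} //
        ∀ i, (I.filter fun j => M.1 i j).card ≠ 1}
      = z l I.card * l ^ (n - I.card) := by
  have e0 : {M : {M : Fin l → Fin n → Bool // isS M} //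
        ∀ i, (I.filter fun j => M.1 i j).card ≠ 1}
      ≃ {f : Fin n → Fin l // ∀ i, (I.filter fun j => f j = i).card ≠ 1} :=
    (Equiv.subtypeEquiv (Equiv.ofBijective _ mkMat_bij) (by
      intro f
      have hfil : ∀ i, (I.filter fun j => mkMat f i j) = I.filter fun j => f j = i := by
        intro i; apply Finset.filter_congr; intro j _; simp [mkMat]
      simp only [Equiv.ofBijective_apply]
      constructor
      · intro h i; rw [hfil i]; exact h i
      · intro h i; have h2 := h i; rwa [hfil i] at h2)).symm
  have e1 : {f : Fin n → Fin l // ∀ i, (I.filter fun j => f j = i).card ≠ 1}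
      ≃ {p : ({j // j ∈ I} → Fin l) × ({j // ¬ j ∈ I} → Fin l) //
          ∀ i, (Finset.univ.filter fun x : {j // j ∈ I} => p.1 x = i).card ≠ 1} :=
    (Equiv.piEquivPiSubtypeProd (· ∈ I) (fun _ => Fin l)).subtypeEquiv (by
      intro f
      constructor
      · intro h i
        show (Finset.univ.filter fun x : {j // j ∈ I} => f x.1 = i).card ≠ 1
        rw [← filter_card_attach I f i]; exact h i
      · intro h i
        have h2 : (Finset.univ.filter fun x : {j // j ∈ I} => f x.1 = i).card ≠ 1 := h i
        rw [filter_card_attach I f i]; exact h2)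
  have e2 : {p : ({j // j ∈ I} → Fin l) × ({j // ¬ j ∈ I} → Fin l) //
          ∀ i, (Finset.univ.filter fun x : {j // j ∈ I} => p.1 x = i).card ≠ 1}
      ≃ {g : {j // j ∈ I} → Fin l //
          ∀ i, (Finset.univ.filter fun x => g x = i).card ≠ 1} × ({j // ¬ j ∈ I} → Fin l) :=
    Equiv.prodSubtypeFstEquivSubtypeProd (p := fun g : {j // j ∈ I} → Fin l =>
      ∀ i, (Finset.univ.filter fun x => g x = i).card ≠ 1)
  rw [Fintype.card_congr ((e0.trans e1).trans e2), Fintype.card_prod, cardP' _ l,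
    Fintype.card_fun, Fintype.card_coe]
  congr 2
  · rw [Fintype.card_fin]
  · rw [Fintype.card_subtype_compl, Fintype.card_fin, Fintype.card_coe]

lemma cardB {l n k : ℕ} (I : Finset (Fin n)) :
    Fintype.card {B : Fin k → {M : Fin l → Fin n → Bool // isS M} // stopOn B I}
      = (z l I.card * l ^ (n - I.card)) ^ k := by
  have e : {B : Fin k → {M : Fin l → Fin n → Bool // isS M} // stopOn B I}
      ≃ (Fin k → {M : {M : Fin l → Fin n → Bool // isS M} //
          ∀ i, (I.filter fun j => M.1 i j).card ≠ 1}) :=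
    Equiv.subtypePiEquivPi (p := fun _ (M : {M : Fin l → Fin n → Bool // isS M}) =>
      ∀ i, (I.filter fun j => M.1 i j).card ≠ 1)
  rw [Fintype.card_congr e, Fintype.card_fun, cardQI, Fintype.card_fin]

lemma z_one (l : ℕ) : z l 1 = 0 := by
  rw [z, Fintype.card_eq_zero_iff]
  constructor
  rintro ⟨M, hS, hStop⟩
  obtain ⟨a, ha⟩ := Finset.card_eq_one.mp (hS 0)
  apply hStop a
  have haM : M a 0 = true := by
    have : a ∈ ({a} : Finset (Fin l)) := Finset.mem_singleton_self a
    rw [← ha] at this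
    simpa using this
  rw [rowWt]
  have : (Finset.univ.filter fun j : Fin 1 => M a j) = {0} := by
    ext j
    fin_cases j
    simp [haM]
  rw [this, Finset.card_singleton]

/-- Union bound on the listing failure probability. -/
theorem listing_failure_union_bound (l n k : ℕ) (hl : 1 ≤ l) (hn : 1 ≤ n) (hk : 1 ≤ k) :
    (Fintype.card {B : Fin k → {M : Fin l → Fin n → Bool // isS M} //
        ∃ I : Finset (Fin n), I.Nonempty ∧ stopOn B I} : ℚ) / (l : ℚ) ^ (n * k) ≤
    ∑ i ∈ Finset.Icc 2 n, (n.choose i : ℚ) * ((z l i : ℚ) / (l : ℚ) ^ i) ^ k := by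
  classical
  have hl0 : (0:ℚ) < (l:ℚ) := by exact_mod_cast hl
  have hlne : (l:ℚ) ≠ 0 := ne_of_gt hl0
  set s : Finset (Finset (Fin n)) := Finset.univ.filter (fun I => I.Nonempty) with hs
  have h1 : Fintype.card {B : Fin k → {M : Fin l → Fin n → Bool // isS M} //
        ∃ I : Finset (Fin n), I.Nonempty ∧ stopOn B I}
      ≤ ∑ I ∈ s, (z l I.card * l ^ (n - I.card)) ^ k := by
    rw [Fintype.card_subtype]
    calc (Finset.univ.filter fun B : Fin k → {M : Fin l → Fin n → Bool // isS M} =>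
            ∃ I : Finset (Fin n), I.Nonempty ∧ stopOn B I).card
        ≤ (s.biUnion fun I => Finset.univ.filter fun B => stopOn B I).card := by
          apply Finset.card_le_card
          intro B hB
          simp only [Finset.mem_filter, Finset.mem_univ, true_and] at hB
          obtain ⟨I, hI, hst⟩ := hB
          exact Finset.mem_biUnion.mpr ⟨I, by simp [hs, hI], by simp [hst]⟩
      _ ≤ ∑ I ∈ s, (Finset.univ.filter fun B => stopOn B I).card := Finset.card_biUnion_le
      _ = ∑ I ∈ s, (z l I.card * l ^ (n - I.card)) ^ k := by
          refine Finset.sum_congr rfl fun I _ => ?_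
          rw [← Fintype.card_subtype, cardB]
  have hterm : ∀ i : ℕ, i ≤ n →
      (((z l i * l ^ (n - i)) ^ k : ℕ) : ℚ) / (l:ℚ) ^ (n*k)
        = ((z l i : ℚ) / (l:ℚ) ^ i) ^ k := by
    intro i hin
    push_cast
    rw [pow_mul, ← div_pow]
    congr 1
    rw [show (l:ℚ) ^ n = (l:ℚ) ^ i * (l:ℚ) ^ (n-i) by
      rw [← pow_add, Nat.add_sub_cancel' hin]]
    rw [mul_comm ((l:ℚ) ^ i) _, mul_comm ((z l i : ℚ)) _]
    rw [mul_div_mul_left _ _ (pow_ne_zero _ hlne)]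
  have h2 : (Fintype.card {B : Fin k → {M : Fin l → Fin n → Bool // isS M} //
        ∃ I : Finset (Fin n), I.Nonempty ∧ stopOn B I} : ℚ) / (l : ℚ) ^ (n * k)
      ≤ ∑ I ∈ s, ((z l I.card : ℚ) / (l:ℚ) ^ I.card) ^ k := by
    calc (Fintype.card {B : Fin k → {M : Fin l → Fin n → Bool // isS M} //
            ∃ I : Finset (Fin n), I.Nonempty ∧ stopOn B I} : ℚ) / (l : ℚ) ^ (n * k)
        ≤ ((∑ I ∈ s, (z l I.card * l ^ (n - I.card)) ^ k : ℕ) : ℚ) / (l:ℚ) ^ (n*k) := by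
          exact (div_le_div_iff_of_pos_right (pow_pos hl0 _)).mpr (by exact_mod_cast h1)
      _ = ∑ I ∈ s, ((z l I.card : ℚ) / (l:ℚ) ^ I.card) ^ k := by
          rw [Nat.cast_sum, Finset.sum_div]
          refine Finset.sum_congr rfl fun I _ => ?_
          exact hterm I.card (by simpa using Finset.card_le_univ I)
  refine h2.trans (le_of_eq ?_)
  have hfib : ∀ i ∈ Finset.Icc 1 n, (s.filter fun I => I.card = i).card = n.choose i := by
    intro i hi
    simp only [Finset.mem_Icc] at hi
    have : s.filter (fun I => I.card = i) = Finset.powersetCard i Finset.univ := by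
      ext J
      simp only [hs, Finset.mem_filter, Finset.mem_univ, true_and,
        Finset.mem_powersetCard_univ]
      constructor
      · rintro ⟨_, h⟩; exact h
      · intro h
        exact ⟨Finset.card_pos.mp (by omega), h⟩
    rw [this, Finset.card_powersetCard, Finset.card_fin]
  have hmaps : ∀ I ∈ s, I.card ∈ Finset.Icc 1 n := by
    intro I hI
    simp only [hs, Finset.mem_filter, Finset.mem_univ, true_and] at hI
    rw [Finset.mem_Icc]
    constructor
    · exact Finset.card_pos.mpr hI
    · simpa using Finset.card_le_univ I
  rw [← Finset.sum_fiberwise_of_maps_to hmaps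
    (fun I => ((z l I.card : ℚ) / (l:ℚ) ^ I.card) ^ k)]
  have hstep : ∀ i ∈ Finset.Icc 1 n,
      (∑ I ∈ s.filter fun I => I.card = i, ((z l I.card : ℚ) / (l:ℚ) ^ I.card) ^ k)
        = (n.choose i : ℚ) * ((z l i : ℚ) / (l:ℚ) ^ i) ^ k := by
    intro i hi
    rw [Finset.sum_congr rfl (fun J hJ => by
      rw [(Finset.mem_filter.mp hJ).2]), Finset.sum_const, hfib i hi, nsmul_eq_mul]
  rw [Finset.sum_congr rfl hstep]
  symm
  apply Finset.sum_subset (Finset.Icc_subset_Icc_left (by norm_num))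
  intro x hx hnx
  simp only [Finset.mem_Icc] at hx hnx
  have hx1 : x = 1 := by omega
  subst hx1
  rw [z_one]
  simp [zero_pow (Nat.one_le_iff_ne_zero.mp hk)]
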